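/- Let μ be a probability measure on ℝ with μ((0,∞)) = 1 and ∫ ε dμ(ε) < ∞, let M(t) = ∫ exp(t·ε) dμ(ε), and let Δq > 0 with M(Δq) < ∞. Set ε* = ln[ (∫ ε dμ(ε)) / (∫ ε·exp(−ε·Δq) dμ(ε)) ] (the differential privacy guarantee of the Randomized DP Laplace mechanism). If there exists γ > 0 such that the mixture usefulness exceeds the baseline usefulness at the same budget, i.e., 1 − M(−γ) > 1 − exp(−γ·ε*/Δq), then necessarily (∫ ε dμ(ε)) / (∫ ε·exp(−ε·Δq) dμ(ε)) < M(Δq). -/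

import Mathlib

open MeasureTheory Real

/-- Necessary condition for a Randomized DP Laplace mechanism to boost utility over the
baseline Laplace mechanism at the same privacy budget
`ε* = ln[ E(1/b) / M′_{1/b}(−Δq) ]`: if the mixture usefulness `1 − M(−γ)` exceeds the
baseline usefulness `1 − exp(−γ·ε*/Δq)` for some `γ > 0`, then necessarily
`E(1/b)/M′_{1/b}(−Δq) < M(Δq)`. -/
theorem mixture_laplace_necessary_condition
    (μ : Measure ℝ) [IsProbabilityMeasure μ] (hμ : μ (Set.Ioi 0) = 1)
    (hint : Integrable (fun ε : ℝ => ε) μ)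
    (M : ℝ → ℝ)
    (hM : ∀ t : ℝ, M t = ∫ ε, Real.exp (t * ε) ∂μ)
    (Δq : ℝ) (hΔq : 0 < Δq)
    (hMfin : Integrable (fun ε : ℝ => Real.exp (Δq * ε)) μ)
    (εstar : ℝ)
    (hεstar : εstar = Real.log ((∫ ε, ε ∂μ) / (∫ ε, ε * Real.exp (-(ε * Δq)) ∂μ)))
    (hboost : ∃ γ : ℝ, 0 < γ ∧ 1 - Real.exp (-(γ * εstar / Δq)) < 1 - M (-γ)) :
    (∫ ε, ε ∂μ) / (∫ ε, ε * Real.exp (-(ε * Δq)) ∂μ) < M Δq := by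
  obtain ⟨γ, hγ, hb⟩ := hboost
  set R : ℝ := (∫ ε, ε ∂μ) / (∫ ε, ε * Real.exp (-(ε * Δq)) ∂μ) with hR
  -- a.e. positivity of ε
  have haeε : ∀ᵐ ε ∂μ, (0:ℝ) < ε := by
    rw [ae_iff]
    have h1 : {a : ℝ | ¬ (0:ℝ) < a} = (Set.Ioi (0:ℝ))ᶜ := by ext x; simp
    rw [h1, measure_compl measurableSet_Ioi (measure_ne_top μ _), hμ, measure_univ]
    simp
  have hmeas : ∀ t : ℝ, Measurable fun ε : ℝ => Real.exp (t * ε) := fun t =>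
    (Real.continuous_exp.comp (continuous_const.mul continuous_id)).measurable
  -- integrability of exp(-γ ε)
  have hIg : Integrable (fun ε : ℝ => Real.exp ((-γ) * ε)) μ := by
    refine Integrable.mono' (integrable_const 1) (hmeas _).aestronglyMeasurable ?_
    filter_upwards [haeε] with ε hε
    rw [Real.norm_eq_abs, abs_of_pos (Real.exp_pos _)]
    rw [Real.exp_le_one_iff]
    nlinarith
  set A : ℝ := ∫ ε, Real.exp ((-γ) * ε) ∂μ with hA
  set B : ℝ := ∫ ε, Real.exp (Δq * ε) ∂μ with hB
  have hA0 : 0 ≤ A := integral_nonneg fun ε => (Real.exp_pos _).le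
  have hB1 : 1 ≤ B := by
    have hmono := integral_mono_ae (μ := μ) (integrable_const (1:ℝ)) hMfin ?_
    · simpa using hmono
    · filter_upwards [haeε] with ε hε
      rw [show (1:ℝ) = Real.exp 0 by simp]
      exact Real.exp_le_exp.2 (by nlinarith)
  have hB0 : 0 < B := lt_of_lt_of_le one_pos hB1
  -- Hölder exponents
  have hγΔ : 0 < γ + Δq := by linarith
  set p : ℝ := Δq / (γ + Δq) with hp_def
  set q : ℝ := γ / (γ + Δq) with hq_def
  have hp : 0 < p := div_pos hΔq hγΔ
  have hq : 0 < q := div_pos hγ hγΔ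
  have hpq : p + q = 1 := by
    rw [hp_def, hq_def, ← add_div, add_comm Δq γ, div_self hγΔ.ne']
  -- Hölder inequality
  have hH := ENNReal.lintegral_mul_norm_pow_le (μ := μ)
      (f := fun ε => ENNReal.ofReal (Real.exp ((-γ) * ε)))
      (g := fun ε => ENNReal.ofReal (Real.exp (Δq * ε)))
      ((ENNReal.measurable_ofReal.comp (hmeas _)).aemeasurable)
      ((ENNReal.measurable_ofReal.comp (hmeas _)).aemeasurable) hp.le hq.le hpq
  have hLHS : ∀ ε : ℝ, ENNReal.ofReal (Real.exp ((-γ) * ε)) ^ p *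
      ENNReal.ofReal (Real.exp (Δq * ε)) ^ q = 1 := by
    intro ε
    rw [ENNReal.ofReal_rpow_of_pos (Real.exp_pos _),
        ENNReal.ofReal_rpow_of_pos (Real.exp_pos _),
        ← ENNReal.ofReal_mul (by positivity),
        ← Real.exp_mul, ← Real.exp_mul, ← Real.exp_add]
    have : (-γ) * ε * p + Δq * ε * q = 0 := by
      rw [hp_def, hq_def]; field_simp; ring
    rw [this, Real.exp_zero, ENNReal.ofReal_one]
  beta_reduce at hH
  rw [lintegral_congr hLHS, lintegral_one, measure_univ,
      ← ofReal_integral_eq_lintegral_ofReal hIg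
        (Filter.Eventually.of_forall fun ε => (Real.exp_pos _).le),
      ← ofReal_integral_eq_lintegral_ofReal hMfin
        (Filter.Eventually.of_forall fun ε => (Real.exp_pos _).le)] at hH
  rw [← hA, ← hB] at hH
  rw [ENNReal.ofReal_rpow_of_nonneg hA0 hp.le,
      ENNReal.ofReal_rpow_of_nonneg hB0.le hq.le,
      ← ENNReal.ofReal_mul (by positivity), ENNReal.one_le_ofReal] at hH
  -- from 1 ≤ A^p * B^q deduce B^(-(γ/Δq)) ≤ A
  have hBq : (0:ℝ) < B ^ q := Real.rpow_pos_of_pos hB0 q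
  have h1 : B ^ (-q) ≤ A ^ p := by
    rw [Real.rpow_neg hB0.le]
    rw [inv_le_iff_one_le_mul₀ hBq]
    linarith [hH]
  have h2 : B ^ (-(γ / Δq)) ≤ A := by
    have := Real.rpow_le_rpow (Real.rpow_pos_of_pos hB0 (-q)).le h1 (le_of_lt (by positivity : (0:ℝ) < 1/p))
    rw [← Real.rpow_mul hB0.le, ← Real.rpow_mul hA0] at this
    have hpp : p * (1/p) = 1 := by field_simp
    have hqq : -q * (1/p) = -(γ / Δq) := by
      rw [hp_def, hq_def]
      field_simp
    rwa [hpp, hqq, Real.rpow_one] at this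
  -- conclude by contradiction
  by_contra hcon
  push_neg at hcon
  rw [hM] at hcon
  have hlogle : Real.log B ≤ Real.log R := Real.log_le_log hB0 hcon
  have hMA : M (-γ) = A := by rw [hM, hA]
  have hchain : Real.exp (-(γ * εstar / Δq)) ≤ B ^ (-(γ / Δq)) := by
    rw [Real.rpow_def_of_pos hB0, hεstar]
    apply Real.exp_le_exp.2
    rw [mul_neg]
    have : γ * Real.log R / Δq = Real.log R * (γ / Δq) := by ring
    rw [this]
    apply neg_le_neg
    apply mul_le_mul_of_nonneg_right hlogle (by positivity)
  rw [hMA] at hb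
  have : A < A := lt_of_lt_of_le (by linarith) (le_trans hchain h2)
  exact lt_irrefl _ this
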